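/- Up to the affine equivalence f(x) ∼ f(xM + a) + c with M ∈ GL(2, 𝔽₂), a ∈ 𝔽₂² and c ∈ ℤ₄, there are exactly 2 equivalence classes of regular bent generalized Boolean functions from 𝔽₂² to ℤ₄. -/

import Mathlib

open Finset Matrix

/-- Dot product on 𝔽₂ⁿ. -/
def dotp {n : ℕ} (u x : Fin n → ZMod 2) : ZMod 2 := ∑ j, u j * x j

/-- The character (−1)^{u·x}. -/
def chi {n : ℕ} (u x : Fin n → ZMod 2) : ℤ := (-1) ^ (dotp u x).val

/-- Walsh–Hadamard transform of a quaternary generalized Boolean function. -/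
noncomputable def Wq {n : ℕ} (f : (Fin n → ZMod 2) → ZMod 4) (u : Fin n → ZMod 2) : ℂ :=
  ∑ x : Fin n → ZMod 2, (chi u x : ℂ) * Complex.I ^ (f x).val

/-- A quaternary generalized Boolean function is bent. -/
def IsQBent {n : ℕ} (f : (Fin n → ZMod 2) → ZMod 4) : Prop :=
  ∀ u, ‖Wq f u‖ = Real.sqrt 2 ^ n

/-- A quaternary generalized Boolean function is regular bent. -/
def IsQRegularBent {n : ℕ} (f : (Fin n → ZMod 2) → ZMod 4) : Prop :=
  IsQBent f ∧ ∃ fhat : (Fin n → ZMod 2) → ZMod 4,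
    ∀ u, Wq f u = (Real.sqrt 2 : ℂ) ^ n * Complex.I ^ (fhat u).val

/-- Affine equivalence of quaternary generalized Boolean functions:
`g ∼ f` when `g(x) = f(xM + a) + c` for some invertible `M`, `a ∈ 𝔽₂ⁿ`, `c ∈ ℤ₄`. -/
def AffEquiv {n : ℕ} (f g : (Fin n → ZMod 2) → ZMod 4) : Prop :=
  ∃ M : Matrix (Fin n) (Fin n) (ZMod 2), IsUnit M ∧
    ∃ (a : Fin n → ZMod 2) (c : ZMod 4), ∀ x, g x = f (Matrix.vecMul x M + a) + c

/-! ### Auxiliary machinery -/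

/-- Real part of `i^c`. -/
def iRe (c : ZMod 4) : ℤ :=
  if c.val = 0 then 1 else if c.val = 2 then -1 else 0

/-- Imaginary part of `i^c`. -/
def iIm (c : ZMod 4) : ℤ :=
  if c.val = 1 then 1 else if c.val = 3 then -1 else 0

lemma Ipow_eq (c : ZMod 4) :
    Complex.I ^ c.val = (iRe c : ℂ) + (iIm c : ℂ) * Complex.I := by
  have v0 : (0 : ZMod 4).val = 0 := rfl
  have v1 : (1 : ZMod 4).val = 1 := rfl
  have v2 : (2 : ZMod 4).val = 2 := rfl
  have v3 : (3 : ZMod 4).val = 3 := rfl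
  fin_cases c <;>
    simp [iRe, iIm, v0, v1, v2, v3, ZMod.val, pow_succ, Complex.I_mul_I]

/-- Integer real part of the Walsh transform. -/
def WzR {n : ℕ} (f : (Fin n → ZMod 2) → ZMod 4) (u : Fin n → ZMod 2) : ℤ :=
  ∑ x : Fin n → ZMod 2, chi u x * iRe (f x)

/-- Integer imaginary part of the Walsh transform. -/
def WzI {n : ℕ} (f : (Fin n → ZMod 2) → ZMod 4) (u : Fin n → ZMod 2) : ℤ :=
  ∑ x : Fin n → ZMod 2, chi u x * iIm (f x)

lemma wq_eq {n : ℕ} (f : (Fin n → ZMod 2) → ZMod 4) (u : Fin n → ZMod 2) :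
    Wq f u = (WzR f u : ℂ) + (WzI f u : ℂ) * Complex.I := by
  have : Wq f u = ∑ x : Fin n → ZMod 2,
      (((chi u x * iRe (f x) : ℤ) : ℂ) + ((chi u x * iIm (f x) : ℤ) : ℂ) * Complex.I) := by
    refine Finset.sum_congr rfl fun x _ => ?_
    rw [Ipow_eq]
    push_cast
    ring
  rw [this, Finset.sum_add_distrib, ← Finset.sum_mul, WzR, WzI]
  push_cast
  ring

lemma gauss_inj {a b c d : ℤ} (h : (a : ℂ) + (b : ℂ) * Complex.I = (c : ℂ) + (d : ℂ) * Complex.I) :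
    a = c ∧ b = d := by
  have hr := congrArg Complex.re h
  have hi := congrArg Complex.im h
  simp [Complex.add_re, Complex.add_im, Complex.mul_re, Complex.mul_im] at hr hi
  exact ⟨by exact_mod_cast hr, by exact_mod_cast hi⟩

/-- Decidable characterization of regular bentness for `n = 2`. -/
def Preg (f : (Fin 2 → ZMod 2) → ZMod 4) : Prop :=
  ∀ u : Fin 2 → ZMod 2,
    (WzR f u = 2 ∧ WzI f u = 0) ∨ (WzR f u = 0 ∧ WzI f u = 2) ∨
    (WzR f u = -2 ∧ WzI f u = 0) ∨ (WzR f u = 0 ∧ WzI f u = -2)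

instance : DecidablePred Preg := fun _ => by unfold Preg; infer_instance

lemma sqrt_two_sq_complex : ((Real.sqrt 2 : ℂ)) ^ 2 = 2 := by
  have : (Real.sqrt 2) ^ 2 = 2 := Real.sq_sqrt (by norm_num)
  calc ((Real.sqrt 2 : ℂ)) ^ 2 = (((Real.sqrt 2) ^ 2 : ℝ) : ℂ) := by push_cast; ring
    _ = 2 := by rw [this]; norm_num

lemma regBent_iff_exists (f : (Fin 2 → ZMod 2) → ZMod 4) :
    IsQRegularBent f ↔ ∀ u, ∃ c : ZMod 4, Wq f u = 2 * Complex.I ^ c.val := by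
  constructor
  · rintro ⟨-, fhat, h⟩ u
    exact ⟨fhat u, by rw [h u, sqrt_two_sq_complex]⟩
  · intro h
    choose fhat hh using h
    refine ⟨fun u => ?_, fhat, fun u => by rw [hh u, sqrt_two_sq_complex]⟩
    rw [hh u]
    rw [show ‖(2 * Complex.I ^ (fhat u).val)‖ = 2 by
      simp [_root_.map_mul, _root_.map_pow, Complex.norm_I]]
    have : (Real.sqrt 2) ^ 2 = 2 := Real.sq_sqrt (by norm_num)
    rw [this]

lemma exists_iff_P (f : (Fin 2 → ZMod 2) → ZMod 4) (u : Fin 2 → ZMod 2) :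
    (∃ c : ZMod 4, Wq f u = 2 * Complex.I ^ c.val) ↔
    ((WzR f u = 2 ∧ WzI f u = 0) ∨ (WzR f u = 0 ∧ WzI f u = 2) ∨
     (WzR f u = -2 ∧ WzI f u = 0) ∨ (WzR f u = 0 ∧ WzI f u = -2)) := by
  constructor
  · rintro ⟨c, hc⟩
    rw [wq_eq, Ipow_eq] at hc
    have h2 : (WzR f u : ℂ) + (WzI f u : ℂ) * Complex.I
        = ((2 * iRe c : ℤ) : ℂ) + ((2 * iIm c : ℤ) : ℂ) * Complex.I := by
      rw [hc]; push_cast; ring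
    obtain ⟨h1, h2⟩ := gauss_inj h2
    fin_cases c <;> simp [iRe, iIm] at h1 h2 <;> tauto
  · intro h
    rw [wq_eq]
    have v0 : (0 : ZMod 4).val = 0 := rfl
    have v1 : (1 : ZMod 4).val = 1 := rfl
    have v2 : (2 : ZMod 4).val = 2 := rfl
    have v3 : (3 : ZMod 4).val = 3 := rfl
    rcases h with ⟨h1, h2⟩ | ⟨h1, h2⟩ | ⟨h1, h2⟩ | ⟨h1, h2⟩
    · exact ⟨0, by rw [h1, h2, v0]; norm_num⟩
    · exact ⟨1, by rw [h1, h2, v1]; norm_num⟩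
    · exact ⟨2, by rw [h1, h2, v2]; simp [pow_succ, Complex.I_mul_I]⟩
    · exact ⟨3, by rw [h1, h2, v3]; simp [pow_succ, Complex.I_mul_I]⟩

lemma regBent_iff_P (f : (Fin 2 → ZMod 2) → ZMod 4) :
    IsQRegularBent f ↔ Preg f := by
  rw [regBent_iff_exists]
  exact forall_congr' fun u => exists_iff_P f u

/-! ### Decidable version of affine equivalence -/

/-- Decidable affine equivalence for `n = 2`. -/
def AffEquivD (f g : (Fin 2 → ZMod 2) → ZMod 4) : Prop :=
  ∃ M : Matrix (Fin 2) (Fin 2) (ZMod 2),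
    (M 0 0 * M 1 1 - M 0 1 * M 1 0 = 1) ∧
    ∃ (a : Fin 2 → ZMod 2) (c : ZMod 4), ∀ x, g x = f (Matrix.vecMul x M + a) + c

instance (f g : (Fin 2 → ZMod 2) → ZMod 4) : Decidable (AffEquivD f g) := by
  unfold AffEquivD; infer_instance

lemma isUnit_iff_det_one (M : Matrix (Fin 2) (Fin 2) (ZMod 2)) :
    IsUnit M ↔ M 0 0 * M 1 1 - M 0 1 * M 1 0 = 1 := by
  rw [Matrix.isUnit_iff_isUnit_det, isUnit_iff_ne_zero, Matrix.det_fin_two]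
  revert M
  intro M
  generalize (M 0 0 * M 1 1 - M 0 1 * M 1 0) = d
  revert d
  decide

lemma affEquivD_iff (f g : (Fin 2 → ZMod 2) → ZMod 4) :
    AffEquivD f g ↔ AffEquiv f g := by
  unfold AffEquivD AffEquiv
  exact exists_congr fun M => and_congr_left fun _ => (isUnit_iff_det_one M).symm

/-! ### AffEquiv is an equivalence relation -/

lemma affEquiv_refl {n : ℕ} (f : (Fin n → ZMod 2) → ZMod 4) : AffEquiv f f :=
  ⟨1, isUnit_one, 0, 0, fun x => by simp [Matrix.vecMul_one]⟩

lemma affEquiv_symm {n : ℕ} {f g : (Fin n → ZMod 2) → ZMod 4}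
    (h : AffEquiv f g) : AffEquiv g f := by
  obtain ⟨M, hM, a, c, h⟩ := h
  obtain ⟨N, hMN, hNM⟩ := isUnit_iff_exists.mp hM
  refine ⟨N, isUnit_iff_exists.mpr ⟨M, hNM, hMN⟩, Matrix.vecMul a N, -c, fun y => ?_⟩
  have hx := h (Matrix.vecMul y N + Matrix.vecMul a N)
  have hv : Matrix.vecMul (Matrix.vecMul y N + Matrix.vecMul a N) M + a = y := by
    rw [Matrix.add_vecMul, Matrix.vecMul_vecMul, Matrix.vecMul_vecMul, hNM,
      Matrix.vecMul_one, Matrix.vecMul_one]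
    have : a + a = 0 := by
      funext i
      simp [CharTwo.add_self_eq_zero]
    rw [add_assoc, this, add_zero]
  rw [hv] at hx
  rw [hx]
  ring

lemma affEquiv_trans {n : ℕ} {f g h : (Fin n → ZMod 2) → ZMod 4}
    (h1 : AffEquiv f g) (h2 : AffEquiv g h) : AffEquiv f h := by
  obtain ⟨M, hM, a, c, hg⟩ := h1
  obtain ⟨N, hN, b, d, hh⟩ := h2
  refine ⟨N * M, hN.mul hM, Matrix.vecMul b M + a, d + c, fun x => ?_⟩
  rw [hh x, hg (Matrix.vecMul x N + b)]
  rw [Matrix.add_vecMul, ← Matrix.vecMul_vecMul, add_assoc]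
  ring

/-! ### The two representatives -/

/-- Representative of the first class: `f(x) = x₀ + 2x₀x₁`. -/
def qf0 : (Fin 2 → ZMod 2) → ZMod 4 := fun x =>
  if x 0 = 0 then 0 else if x 1 = 0 then 1 else 3

/-- Representative of the second class: `f(x) = 2x₀x₁`. -/
def qf1 : (Fin 2 → ZMod 2) → ZMod 4 := fun x =>
  if x 0 = 0 then 0 else if x 1 = 0 then 0 else 2

set_option maxRecDepth 10000 in
lemma preg_qf0 : Preg qf0 := by decide
set_option maxRecDepth 10000 in
lemma preg_qf1 : Preg qf1 := by decide
set_option maxRecDepth 10000 in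
lemma not_equiv_qf0_qf1 : ¬ AffEquivD qf0 qf1 := by decide
set_option maxRecDepth 100000 in
lemma all_classes : ∀ f : (Fin 2 → ZMod 2) → ZMod 4,
    Preg f → AffEquivD qf0 f ∨ AffEquivD qf1 f := by decide

/-! ### main theorem -/

/-- up to affine equivalence there are exactly 2 classes of regular
bent quaternary functions in two variables. -/
theorem classes_quaternary_regular_bent_two_vars :
    Nat.card (Quot fun f g : {f : (Fin 2 → ZMod 2) → ZMod 4 // IsQRegularBent f} =>
      AffEquiv f.1 g.1) = 2 := by
  set r := fun f g : {f : (Fin 2 → ZMod 2) → ZMod 4 // IsQRegularBent f} =>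
      AffEquiv f.1 g.1 with hr
  have hEqvGen : ∀ a b, Relation.EqvGen r a b → AffEquiv a.1 b.1 := by
    intro a b h
    induction h with
    | rel _ _ h => exact h
    | refl _ => exact affEquiv_refl _
    | symm _ _ _ ih => exact affEquiv_symm ih
    | trans _ _ _ _ _ ih1 ih2 => exact affEquiv_trans ih1 ih2
  have hF0 : IsQRegularBent qf0 := (regBent_iff_P qf0).mpr preg_qf0
  have hF1 : IsQRegularBent qf1 := (regBent_iff_P qf1).mpr preg_qf1
  rw [Nat.card_eq_two_iff]
  refine ⟨Quot.mk r ⟨qf0, hF0⟩, Quot.mk r ⟨qf1, hF1⟩, ?_, ?_⟩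
  · intro h
    rw [Quot.eq] at h
    exact not_equiv_qf0_qf1 ((affEquivD_iff qf0 qf1).mpr (hEqvGen _ _ h))
  · rw [Set.eq_univ_iff_forall]
    intro q
    induction q using Quot.ind with
    | _ f =>
      rw [Set.mem_insert_iff, Set.mem_singleton_iff]
      rcases all_classes f.1 ((regBent_iff_P f.1).mp f.2) with h | h
      · left
        have h' : r ⟨qf0, hF0⟩ f := (affEquivD_iff qf0 f.1).mp h
        exact (Quot.sound h').symm
      · right
        have h' : r ⟨qf1, hF1⟩ f := (affEquivD_iff qf1 f.1).mp h
        exact (Quot.sound h').symm
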